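/- For every real number x with 0 < x < 1 and every positive integer n, the product ∏_{k=1}^{n} (1 - x^k) is at least exp( (x(1 - x^n)/(1 - x)) · (ln(1 - x) - 1) ). -/

import Mathlib

theorem stmt_0 (x : ℝ) (hx0 : 0 < x) (hx1 : x < 1) (n : ℕ) (hn : 1 ≤ n) :
    ∏ k ∈ Finset.Icc 1 n, (1 - x ^ k) ≥
      Real.exp (x * (1 - x ^ n) / (1 - x) * (Real.log (1 - x) - 1)) := by
  have h1x : 0 < 1 - x := by linarith
  have hlog : -x ≤ Real.log (1 - x) * (1 - x) := by
    have h := Real.log_le_sub_one_of_pos (x := (1 - x)⁻¹) (by positivity)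
    rw [Real.log_inv] at h
    have h2 : (1 - x)⁻¹ - 1 = x / (1 - x) := by field_simp; ring
    rw [h2] at h
    have h3 : x / (1 - x) * (1 - x) = x := by field_simp
    nlinarith [Real.log_nonpos (by linarith) (by linarith : (1:ℝ) - x ≤ 1)]
  have key : ∀ k ∈ Finset.Icc 1 n,
      Real.exp (x ^ k * (Real.log (1 - x) - 1)) ≤ 1 - x ^ k := by
    intro k hk
    have hk1 : 1 ≤ k := (Finset.mem_Icc.mp hk).1
    have hxk : x ^ k < 1 := pow_lt_one₀ hx0.le hx1 (by omega)
    have hpos : 0 < 1 - x ^ k := by linarith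
    have hlam0 : (0:ℝ) ≤ x ^ (k - 1) := by positivity
    have hlam1 : x ^ (k - 1) ≤ 1 := pow_le_one₀ hx0.le hx1.le
    have hmul : x ^ (k - 1) * x = x ^ k := by
      rw [← pow_succ]
      congr 1
      omega
    have hc := (strictConcaveOn_log_Ioi.concaveOn).2 (Set.mem_Ioi.mpr one_pos)
      (Set.mem_Ioi.mpr h1x) (by linarith : (0:ℝ) ≤ 1 - x ^ (k - 1)) hlam0
      (by ring)
    simp only [smul_eq_mul, Real.log_one, mul_one, mul_zero, zero_add] at hc
    have harg : 1 - x ^ (k - 1) + x ^ (k - 1) * (1 - x) = 1 - x ^ k := by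
      rw [← hmul]; ring
    rw [harg] at hc
    -- hc : x ^ (k-1) * Real.log (1-x) ≤ Real.log (1 - x^k)
    have h4 : 0 ≤ x ^ (k - 1) * (Real.log (1 - x) * (1 - x) + x) :=
      mul_nonneg hlam0 (by linarith)
    have h5 : x ^ k * (Real.log (1 - x) - 1) ≤ Real.log (1 - x ^ k) := by
      nlinarith [hc]
    calc Real.exp (x ^ k * (Real.log (1 - x) - 1))
        ≤ Real.exp (Real.log (1 - x ^ k)) := Real.exp_le_exp.mpr h5
      _ = 1 - x ^ k := Real.exp_log hpos
  have hsum : ∑ k ∈ Finset.Icc 1 n, x ^ k * (Real.log (1 - x) - 1)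
      = x * (1 - x ^ n) / (1 - x) * (Real.log (1 - x) - 1) := by
    rw [← Finset.sum_mul]
    congr 1
    rw [← Finset.Ico_add_one_right_eq_Icc, Finset.sum_Ico_eq_sum_range]
    norm_num
    have : ∀ k, x ^ (1 + k) = x * x ^ k := fun k => by rw [pow_add, pow_one]
    simp only [this]
    rw [← Finset.mul_sum, geom_sum_eq (by linarith : x ≠ 1)]
    have hne : x - 1 ≠ 0 := by linarith
    field_simp
    ring
  rw [ge_iff_le, ← hsum, Real.exp_sum]
  exact Finset.prod_le_prod (fun k _ => (Real.exp_pos _).le) key
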